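/- Let I be an ideal of R = Z[x_1,…,x_l] and σ a term ordering on R. If a prime number p is σ-lucky for I, then p is a non-zero divisor on R/I, i.e., for every f ∈ R, pf ∈ I implies f ∈ I. -/

import Mathlib

namespace HApaper

/-- A term ordering on the monomials of `ℤ[x_1,…,x_l]`: a linear order on the
exponent vectors which has `1` as least monomial and is compatible with
multiplication of monomials. -/
structure TermOrder (l : ℕ) where
  lin : LinearOrder (Fin l →₀ ℕ)
  zero_le : ∀ m, lin.le 0 m
  add_le_add_right : ∀ a b c, lin.le a b → lin.le (a + c) (b + c)

/-- The leading monomial `LM_σ(f)` of a polynomial (junk value `0` for `f = 0`). -/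
noncomputable def TermOrder.lm {l : ℕ} (σ : TermOrder l) (f : MvPolynomial (Fin l) ℤ) :
    Fin l →₀ ℕ :=
  letI := σ.lin
  WithBot.unbotD 0 f.support.max

/-- The leading coefficient `LC_σ(f)`. -/
noncomputable def TermOrder.lc {l : ℕ} (σ : TermOrder l) (f : MvPolynomial (Fin l) ℤ) : ℤ :=
  MvPolynomial.coeff (σ.lm f) f

/-- The leading term `LT_σ(f) = LC_σ(f)·x^{LM_σ(f)}`, as an element of `ℤ[x_1,…,x_l]`. -/
noncomputable def TermOrder.lt {l : ℕ} (σ : TermOrder l) (f : MvPolynomial (Fin l) ℤ) :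
    MvPolynomial (Fin l) ℤ :=
  MvPolynomial.monomial (σ.lm f) (σ.lc f)

/-- `G` is a minimal strong `σ`-Gröbner basis of `I` if: its elements are nonzero,
it generates `I`, the leading term of every nonzero element of `I` is divisible by the
leading term of some element of `G`, and no leading term of an element of `G` divides
the leading term of another element of `G`. -/
def IsMinimalStrongGroebnerBasis {l : ℕ} (σ : TermOrder l)
    (I : Ideal (MvPolynomial (Fin l) ℤ)) (G : Finset (MvPolynomial (Fin l) ℤ)) : Prop :=
  (∀ g ∈ G, g ≠ 0) ∧
  Ideal.span (G : Set (MvPolynomial (Fin l) ℤ)) = I ∧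
  (∀ f ∈ I, f ≠ 0 → ∃ g ∈ G, σ.lt g ∣ σ.lt f) ∧
  (∀ g ∈ G, ∀ g' ∈ G, g ≠ g' → ¬ σ.lt g ∣ σ.lt g')

/-- A prime `p` is `σ`-lucky for `I` if it divides no leading coefficient of a
minimal strong `σ`-Gröbner basis of `I`. -/
def IsLuckyPrime {l : ℕ} (σ : TermOrder l) (I : Ideal (MvPolynomial (Fin l) ℤ))
    (p : ℕ) : Prop :=
  ∃ G : Finset (MvPolynomial (Fin l) ℤ), IsMinimalStrongGroebnerBasis σ I G ∧
    ∀ g ∈ G, ¬ ((p : ℤ) ∣ σ.lc g)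

section Aux

open MvPolynomial

variable {l : ℕ} (σ : TermOrder l)

/-- Pointwise (divisibility) order implies the term order. -/
lemma TermOrder.le_of_exists_add {a b : Fin l →₀ ℕ} (h : ∃ e, a + e = b) :
    σ.lin.le a b := by
  obtain ⟨e, rfl⟩ := h
  have := σ.add_le_add_right 0 e a (σ.zero_le e)
  rwa [zero_add, add_comm e a] at this

/-- The term order is well-founded (by Dickson's lemma). -/
lemma TermOrder.wf : WellFounded σ.lin.lt := by
  rw [RelEmbedding.wellFounded_iff_isEmpty]
  constructor
  intro f
  obtain ⟨m, n, hmn, hle⟩ := wellQuasiOrdered_le (α := Fin l →₀ ℕ) f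
  have h1 : σ.lin.le (f m) (f n) := σ.le_of_exists_add ⟨f n - f m,
    by rw [add_tsub_cancel_of_le hle]⟩
  have h2 : σ.lin.lt (f n) (f m) := f.map_rel_iff.2 hmn
  exact ((σ.lin.lt_iff_le_not_ge _ _).1 h2).2 h1

variable {σ}

lemma TermOrder.lm_eq_max' {f : MvPolynomial (Fin l) ℤ} (hf : f ≠ 0) :
    σ.lm f = @Finset.max' _ σ.lin f.support (MvPolynomial.support_nonempty.2 hf) := by
  have h := @Finset.coe_max' _ σ.lin f.support (MvPolynomial.support_nonempty.2 hf)
  have h3 := congrArg (WithBot.unbotD (0 : Fin l →₀ ℕ)) h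
  rw [WithBot.unbotD_coe] at h3
  exact h3.symm

lemma TermOrder.lm_mem_support {f : MvPolynomial (Fin l) ℤ} (hf : f ≠ 0) :
    σ.lm f ∈ f.support := by
  rw [TermOrder.lm_eq_max' hf]
  exact @Finset.max'_mem _ σ.lin _ _

lemma TermOrder.lc_ne_zero {f : MvPolynomial (Fin l) ℤ} (hf : f ≠ 0) : σ.lc f ≠ 0 :=
  MvPolynomial.mem_support_iff.1 (TermOrder.lm_mem_support hf)

lemma TermOrder.le_lm {f : MvPolynomial (Fin l) ℤ} (hf : f ≠ 0) {m : Fin l →₀ ℕ}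
    (hm : m ∈ f.support) : σ.lin.le m (σ.lm f) := by
  rw [TermOrder.lm_eq_max' hf]
  exact @Finset.le_max' _ σ.lin _ m hm

lemma TermOrder.lm_eq_of {f : MvPolynomial (Fin l) ℤ} {μ : Fin l →₀ ℕ}
    (h1 : MvPolynomial.coeff μ f ≠ 0) (h2 : ∀ m ∈ f.support, σ.lin.le m μ) :
    σ.lm f = μ := by
  have hf : f ≠ 0 := fun h => h1 (by simp [h])
  exact σ.lin.le_antisymm _ _ (h2 _ (TermOrder.lm_mem_support hf))
    (TermOrder.le_lm hf (MvPolynomial.mem_support_iff.2 h1))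

lemma TermOrder.lm_natCast_mul {f : MvPolynomial (Fin l) ℤ} (hf : f ≠ 0) {p : ℕ}
    (hp : p ≠ 0) :
    σ.lm ((p : MvPolynomial (Fin l) ℤ) * f) = σ.lm f ∧
      σ.lc ((p : MvPolynomial (Fin l) ℤ) * f) = (p : ℤ) * σ.lc f := by
  have hC : (p : MvPolynomial (Fin l) ℤ) = MvPolynomial.C (p : ℤ) := by
    rw [map_natCast (MvPolynomial.C : ℤ →+* MvPolynomial (Fin l) ℤ) p]
  have hcoeff : ∀ m, MvPolynomial.coeff m ((p : MvPolynomial (Fin l) ℤ) * f)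
      = (p : ℤ) * MvPolynomial.coeff m f := by
    intro m; rw [hC, MvPolynomial.coeff_C_mul]
  have hpz : (p : ℤ) ≠ 0 := Int.natCast_ne_zero.2 hp
  have hlm : σ.lm ((p : MvPolynomial (Fin l) ℤ) * f) = σ.lm f := by
    apply TermOrder.lm_eq_of
    · rw [hcoeff]; exact mul_ne_zero hpz (TermOrder.lc_ne_zero hf)
    · intro m hm
      apply TermOrder.le_lm hf
      rw [MvPolynomial.mem_support_iff] at hm ⊢
      rw [hcoeff] at hm
      exact fun h => hm (by rw [h, mul_zero])
  refine ⟨hlm, ?_⟩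
  rw [TermOrder.lc, hlm, hcoeff]; rfl

lemma monomial_dvd_monomial {a b : Fin l →₀ ℕ} {c d : ℤ} (hd : d ≠ 0)
    (h : (MvPolynomial.monomial a c : MvPolynomial (Fin l) ℤ) ∣ MvPolynomial.monomial b d) :
    c ∣ d ∧ ∃ e, a + e = b := by
  obtain ⟨q, hq⟩ := h
  have := congrArg (MvPolynomial.coeff b) hq
  rw [MvPolynomial.coeff_monomial, if_pos rfl, MvPolynomial.coeff_monomial_mul'] at this
  split_ifs at this with hab
  · exact ⟨⟨_, this⟩, ⟨b - a, add_tsub_cancel_of_le hab⟩⟩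
  · exact absurd this hd

end Aux

/-- A `σ`-lucky prime for `I` is a non-zero divisor on `R/I`. -/
theorem lucky_prime_is_nonzerodivisor {l : ℕ} (σ : TermOrder l)
    (I : Ideal (MvPolynomial (Fin l) ℤ)) (p : ℕ) (hp : p.Prime)
    (hlucky : IsLuckyPrime σ I p) :
    ∀ f : MvPolynomial (Fin l) ℤ, (p : MvPolynomial (Fin l) ℤ) * f ∈ I → f ∈ I := by
  obtain ⟨G, ⟨hGne, hspan, hdiv, -⟩, hlc⟩ := hlucky
  have hpz : (p : ℤ) ≠ 0 := Int.natCast_ne_zero.2 hp.ne_zero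
  suffices key : ∀ μ : Fin l →₀ ℕ, ∀ f : MvPolynomial (Fin l) ℤ, σ.lm f = μ →
      (p : MvPolynomial (Fin l) ℤ) * f ∈ I → f ∈ I by
    intro f hf; exact key (σ.lm f) f rfl hf
  intro μ
  induction μ using (σ.wf).induction with
  | _ μ IH =>
    rintro f rfl hpf
    by_cases hf0 : f = 0
    · rw [hf0]; exact I.zero_mem
    have hpf0 : (p : MvPolynomial (Fin l) ℤ) * f ≠ 0 := by
      apply mul_ne_zero _ hf0
      exact_mod_cast (Nat.cast_ne_zero (R := MvPolynomial (Fin l) ℤ)).2 hp.ne_zero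
    obtain ⟨g, hg, hdvd⟩ := hdiv _ hpf hpf0
    have hg0 : g ≠ 0 := hGne g hg
    have hgI : g ∈ I := hspan ▸ Ideal.subset_span hg
    obtain ⟨hlm_eq, hlc_eq⟩ := TermOrder.lm_natCast_mul (σ := σ) hf0 hp.ne_zero
    rw [TermOrder.lt, TermOrder.lt, hlm_eq, hlc_eq] at hdvd
    obtain ⟨hcd, e, he⟩ := monomial_dvd_monomial
      (mul_ne_zero hpz (TermOrder.lc_ne_zero hf0)) hdvd
    -- `lc g` is coprime to `p`, so it divides `lc f`
    have hcop : IsCoprime ((p : ℤ)) (σ.lc g) :=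
      (Nat.prime_iff_prime_int.1 hp).coprime_iff_not_dvd.2 (hlc g hg)
    have hcg : σ.lc g ∣ σ.lc f := (hcop.symm).dvd_of_dvd_mul_left hcd
    set c : ℤ := σ.lc f / σ.lc g with hc
    have hcc : σ.lc g * c = σ.lc f := Int.mul_ediv_cancel' hcg
    set q : MvPolynomial (Fin l) ℤ := MvPolynomial.monomial e c with hq
    set h : MvPolynomial (Fin l) ℤ := f - q * g with hh
    have hqgI : q * g ∈ I := I.mul_mem_left q hgI
    -- coefficient of `lm f` in `q * g` equals `lc f`
    have hcoeffqg : MvPolynomial.coeff (σ.lm f) (q * g) = σ.lc f := by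
      rw [hq, MvPolynomial.coeff_monomial_mul', if_pos, ← he, add_tsub_cancel_right,
        mul_comm]
      · exact hcc
      · rw [← he]; exact le_add_self
    have hcoeffh : MvPolynomial.coeff (σ.lm f) h = 0 := by
      rw [hh, MvPolynomial.coeff_sub, hcoeffqg]; exact sub_eq_zero_of_eq rfl
    -- every monomial of `h` is strictly below `lm f`
    have hbound : ∀ m ∈ h.support, σ.lin.lt m (σ.lm f) := by
      intro m hm
      have hmne : m ≠ σ.lm f := by
        rintro rfl; exact (MvPolynomial.mem_support_iff.1 hm) hcoeffh
      have hmle : σ.lin.le m (σ.lm f) := by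
        have hmc : MvPolynomial.coeff m h ≠ 0 := MvPolynomial.mem_support_iff.1 hm
        rw [hh, MvPolynomial.coeff_sub] at hmc
        by_cases hmf : MvPolynomial.coeff m f ≠ 0
        · exact TermOrder.le_lm hf0 (MvPolynomial.mem_support_iff.2 hmf)
        · push_neg at hmf
          rw [hmf, zero_sub, neg_ne_zero, hq, MvPolynomial.coeff_monomial_mul'] at hmc
          split_ifs at hmc with hem
          · have : m - e ∈ g.support :=
              MvPolynomial.mem_support_iff.2 fun hz => hmc (by rw [hz, mul_zero])
            have h1 : σ.lin.le (m - e) (σ.lm g) := TermOrder.le_lm hg0 this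
            have h2 : σ.lin.le (m - e + e) (σ.lm g + e) :=
              σ.add_le_add_right _ _ e h1
            rw [tsub_add_cancel_of_le hem, he] at h2
            exact h2
          · exact absurd rfl hmc
      exact (σ.lin.lt_iff_le_not_ge _ _).2 ⟨hmle, fun hge => hmne (σ.lin.le_antisymm _ _ hmle hge)⟩
    -- `p * h ∈ I`
    have hphI : (p : MvPolynomial (Fin l) ℤ) * h ∈ I := by
      rw [hh, mul_sub]
      exact I.sub_mem hpf (I.mul_mem_left _ hqgI)
    by_cases hh0 : h = 0
    · have : f = q * g := by rw [← sub_eq_zero]; exact hh0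
      rw [this]; exact hqgI
    · have hhin : h ∈ I := IH (σ.lm h) (hbound _ (TermOrder.lm_mem_support hh0)) h rfl hphI
      have : f = h + q * g := by rw [hh]; ring
      rw [this]; exact I.add_mem hhin hqgI

end HApaper
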